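/- Suppose α = (a_k, b_k, c_k)_{k=1,…,5} ∈ 𝒜̄_X maximizes the volume functional 𝒱 over 𝒜̄_X. If for some k ∈ {1,…,5} one of the numbers a_k, b_k, c_k equals 0, then among a_k, b_k, c_k two are equal to 0 and the remaining one is equal to 1/2 (i.e., the k-th tetrahedron is taut). -/

import Mathlib

open Real
open MeasureTheory Set intervalIntegral

/-- The Lobachevsky function `Λ(x) = -∫₀ˣ log |2 sin t| dt`. -/
noncomputable def Lob (x : ℝ) : ℝ := -∫ t in (0:ℝ)..x, Real.log |2 * Real.sin t|

namespace Flat73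

noncomputable def LL (t : ℝ) : ℝ := Real.log |2 * Real.sin t|

lemma Lob_eq (x : ℝ) : Lob x = -∫ t in (0:ℝ)..x, LL t := rfl

lemma Lob_zero : Lob 0 = 0 := by simp [Lob]

lemma measurable_LL : Measurable LL :=
  Real.measurable_log.comp ((continuous_const.mul Real.continuous_sin).abs.measurable)

/-- `log` is interval integrable on `[0,x]` for `x ≤ 1`. -/
lemma intLog (x : ℝ) (hx0 : 0 ≤ x) (hx1 : x ≤ 1) :
    IntervalIntegrable Real.log volume 0 x := by
  apply IntervalIntegrable.mono_fun'
    (g := fun t : ℝ => 2 * t ^ (-(1:ℝ)/2))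
    ((intervalIntegrable_rpow' (by norm_num)).const_mul 2)
    Real.measurable_log.aestronglyMeasurable
  rw [Set.uIoc_of_le hx0]
  refine (ae_restrict_iff' measurableSet_Ioc).2 (Filter.Eventually.of_forall ?_)
  intro t ht
  have ht0 : 0 < t := ht.1
  have ht1 : t ≤ 1 := ht.2.trans hx1
  have hlt : Real.log t ≤ 0 := Real.log_nonpos ht0.le ht1
  have hsq : 0 < Real.sqrt t := Real.sqrt_pos.2 ht0
  have h1 : -Real.log t = 2 * Real.log (Real.sqrt t)⁻¹ := by
    rw [Real.log_inv, Real.log_sqrt ht0.le]; ring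
  have h2 : Real.log (Real.sqrt t)⁻¹ ≤ (Real.sqrt t)⁻¹ - 1 :=
    Real.log_le_sub_one_of_pos (by positivity)
  have h3 : t ^ (-(1:ℝ)/2) = (Real.sqrt t)⁻¹ := by
    rw [Real.sqrt_eq_rpow, ← Real.rpow_neg ht0.le]; norm_num
  have : ‖Real.log t‖ = -Real.log t := by
    rw [Real.norm_eq_abs, abs_of_nonpos hlt]
  show ‖Real.log t‖ ≤ 2 * t ^ (-(1:ℝ)/2)
  rw [this, h1, h3]
  nlinarith [inv_pos.2 hsq]

/-- `log (c*t)` is interval integrable on `[0,x]`, `1 ≤ c ≤ 2`, `x ≤ 1`. -/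
lemma intLinLog (c x : ℝ) (hc1 : 1 ≤ c) (hc2 : c ≤ 2) (hx0 : 0 ≤ x) (hx1 : x ≤ 1) :
    IntervalIntegrable (fun t => Real.log (c * t)) volume 0 x := by
  apply IntervalIntegrable.mono_fun'
    (g := fun t : ℝ => ‖Real.log t‖ + Real.log 2)
    (((intLog x hx0 hx1).norm).add intervalIntegrable_const)
    (Real.measurable_log.comp (measurable_id.const_mul c)).aestronglyMeasurable
  rw [Set.uIoc_of_le hx0]
  refine (ae_restrict_iff' measurableSet_Ioc).2 (Filter.Eventually.of_forall ?_)
  intro t ht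
  have ht0 : 0 < t := ht.1
  have hc0 : (0:ℝ) < c := by linarith
  have : Real.log (c * t) = Real.log c + Real.log t :=
    Real.log_mul (ne_of_gt hc0) (ne_of_gt ht0)
  have hlc0 : 0 ≤ Real.log c := Real.log_nonneg hc1
  have hlc2 : Real.log c ≤ Real.log 2 := Real.log_le_log hc0 hc2
  show ‖Real.log (c * t)‖ ≤ ‖Real.log t‖ + Real.log 2
  simp only [Real.norm_eq_abs]
  rw [this]
  have := abs_add_le (Real.log c) (Real.log t)
  have : |Real.log c| = Real.log c := abs_of_nonneg hlc0
  calc |Real.log c + Real.log t| ≤ |Real.log c| + |Real.log t| := abs_add_le _ _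
    _ ≤ |Real.log t| + Real.log 2 := by rw [abs_of_nonneg hlc0]; linarith

/-- pointwise bounds on LL on (0,1] -/
lemma LL_le (t : ℝ) (ht0 : 0 ≤ t) (ht1 : t ≤ 1) : LL t ≤ Real.log (2 * t) := by
  rcases eq_or_lt_of_le ht0 with h | h
  · simp [LL, ← h]
  · have hs : 0 < Real.sin t := Real.sin_pos_of_pos_of_lt_pi h
      (lt_of_le_of_lt ht1 (by linarith [Real.two_le_pi]))
    have habs : |2 * Real.sin t| = 2 * Real.sin t := abs_of_pos (by linarith)
    rw [LL, habs]
    exact Real.log_le_log (by linarith) (by nlinarith [Real.sin_le ht0])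

lemma LL_ge (t : ℝ) (ht0 : 0 ≤ t) (ht1 : t ≤ 1) : Real.log (4 / π * t) ≤ LL t := by
  rcases eq_or_lt_of_le ht0 with h | h
  · simp [LL, ← h]
  · have hpi : (2:ℝ) ≤ π := Real.two_le_pi
    have hs : 0 < Real.sin t := Real.sin_pos_of_pos_of_lt_pi h (by linarith)
    have habs : |2 * Real.sin t| = 2 * Real.sin t := abs_of_pos (by linarith)
    have hms : 2 / π * t ≤ Real.sin t := Real.mul_le_sin ht0 (by linarith)
    rw [LL, habs]
    have h4 : 0 < 4 / π * t := by positivity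
    apply Real.log_le_log h4
    have : 4 / π * t = 2 * (2 / π * t) := by ring
    linarith [this ▸ le_refl (4 / π * t)]

/-- LL integrable on `[0,x]` for `x ≤ 1`. -/
lemma intLL1 (x : ℝ) (hx0 : 0 ≤ x) (hx1 : x ≤ 1) :
    IntervalIntegrable LL volume 0 x := by
  apply IntervalIntegrable.mono_fun'
    (g := fun t : ℝ => ‖Real.log t‖ + Real.log 2)
    (((intLog x hx0 hx1).norm).add intervalIntegrable_const)
    measurable_LL.aestronglyMeasurable
  rw [Set.uIoc_of_le hx0]
  refine (ae_restrict_iff' measurableSet_Ioc).2 (Filter.Eventually.of_forall ?_)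
  intro t ht
  have ht0 : 0 < t := ht.1
  have ht1 : t ≤ 1 := ht.2.trans hx1
  have hpi : (2:ℝ) ≤ π := Real.two_le_pi
  have h1 : LL t ≤ Real.log (2 * t) := LL_le t ht0.le ht1
  have h2 : Real.log (4 / π * t) ≤ LL t := LL_ge t ht0.le ht1
  have e1 : Real.log (2 * t) = Real.log 2 + Real.log t :=
    Real.log_mul two_ne_zero (ne_of_gt ht0)
  have e2 : Real.log (4 / π * t) = Real.log (4 / π) + Real.log t :=
    Real.log_mul (by positivity) (ne_of_gt ht0)
  have h3 : 0 ≤ Real.log (4 / π) := Real.log_nonneg (by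
    rw [le_div_iff₀ (by positivity)]; linarith [Real.pi_le_four])
  have h4 : Real.log (4 / π) ≤ Real.log 2 := Real.log_le_log (by positivity) (by
    rw [div_le_iff₀ (by positivity)]; linarith)
  show ‖LL t‖ ≤ ‖Real.log t‖ + Real.log 2
  simp only [Real.norm_eq_abs]
  rw [abs_le]
  constructor
  · have := neg_abs_le (Real.log t)
    nlinarith
  · have := le_abs_self (Real.log t)
    nlinarith

lemma contLL_at (t : ℝ) (h0 : 0 < t) (hpi : t < π) : ContinuousAt LL t := by
  have hs : 0 < Real.sin t := Real.sin_pos_of_pos_of_lt_pi h0 hpi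
  have h1 : ContinuousAt (fun x : ℝ => |2 * Real.sin x|) t :=
    ((continuous_const.mul Real.continuous_sin).abs).continuousAt
  exact ContinuousAt.log h1 (by positivity)

/-- LL continuous, hence integrable, away from multiples of π. -/
lemma intLLmid (p q : ℝ) (hp : 0 < p) (hq : q < π) (hpq : p ≤ q) :
    IntervalIntegrable LL volume p q := by
  apply ContinuousOn.intervalIntegrable
  intro t ht
  rw [Set.uIcc_of_le hpq] at ht
  exact (contLL_at t (lt_of_lt_of_le hp ht.1) (lt_of_le_of_lt ht.2 hq)).continuousWithinAt

lemma LL_reflect (t : ℝ) : LL (π - t) = LL t := by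
  simp [LL, Real.sin_pi_sub]

/-- LL integrable on `[0,u]` for `u ∈ [0,π]`. -/
lemma intLL (u : ℝ) (hu0 : 0 ≤ u) (hupi : u ≤ π) :
    IntervalIntegrable LL volume 0 u := by
  have hpi2 : (2:ℝ) ≤ π := Real.two_le_pi
  rcases le_or_gt u 1 with h1 | h1
  · exact intLL1 u hu0 h1
  rcases le_or_gt u (π - 1) with h2 | h2
  · exact (intLL1 1 zero_le_one le_rfl).trans (intLLmid 1 u one_pos (by linarith) h1.le)
  · have base : IntervalIntegrable LL volume 1 (π - u) := by
      apply (intLL1 1 zero_le_one le_rfl).mono_set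
      rw [Set.uIcc_of_ge (by linarith : π - u ≤ 1),
        Set.uIcc_of_le (by norm_num : (0:ℝ) ≤ 1)]
      exact Set.Icc_subset_Icc (by linarith) le_rfl
    have refl0 : IntervalIntegrable (fun x => LL (π - x)) volume (π - 1) (π - (π - u)) :=
      base.comp_sub_left π
    have refl : IntervalIntegrable LL volume (π - 1) u := by
      have : (fun x => LL (π - x)) = LL := funext fun x => LL_reflect x
      rw [this] at refl0
      simpa using refl0
    exact ((intLL1 1 zero_le_one le_rfl).trans
      (intLLmid 1 (π - 1) one_pos (by linarith) (by linarith))).trans refl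

lemma intLL' (u v : ℝ) (hu : u ∈ Set.Icc 0 π) (hv : v ∈ Set.Icc 0 π) :
    IntervalIntegrable LL volume u v :=
  (intLL u hu.1 hu.2).symm.trans (intLL v hv.1 hv.2)

lemma Lob_sub (u v : ℝ) (hu : u ∈ Set.Icc 0 π) (hv : v ∈ Set.Icc 0 π) :
    Lob v - Lob u = -∫ t in u..v, LL t := by
  rw [Lob_eq, Lob_eq, neg_sub_neg,
    intervalIntegral.integral_interval_sub_left (intLL u hu.1 hu.2) (intLL v hv.1 hv.2)]
  exact intervalIntegral.integral_symm u v

lemma Lob_reflect (w : ℝ) (hw : w ∈ Set.Icc 0 π) :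
    Lob (π - w) = Lob π - Lob w := by
  have hpiI : π ∈ Set.Icc 0 π := ⟨Real.pi_pos.le, le_rfl⟩
  have hw' : π - w ∈ Set.Icc 0 π := ⟨by linarith [hw.2], by linarith [hw.1]⟩
  have h0 : (0:ℝ) ∈ Set.Icc 0 π := ⟨le_rfl, Real.pi_pos.le⟩
  have e1 : Lob π - Lob (π - w) = -∫ t in (π - w)..π, LL t := Lob_sub (π - w) π hw' hpiI
  have e2 : (∫ x in (0:ℝ)..w, LL (π - x)) = ∫ t in (π - w)..(π - 0), LL t :=
    intervalIntegral.integral_comp_sub_left LL π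
  have e3 : (∫ x in (0:ℝ)..w, LL (π - x)) = ∫ x in (0:ℝ)..w, LL x := by
    congr 1; exact funext fun x => LL_reflect x
  have e4 : Lob w = -∫ x in (0:ℝ)..w, LL x := Lob_eq w
  rw [sub_zero] at e2
  have : Lob π - Lob (π - w) = Lob w := by rw [e1, ← e2, e3, e4]
  linarith

lemma integral_log_linear (c x : ℝ) (hc1 : 1 ≤ c) (hc2 : c ≤ 2) (hx : 0 < x) (hx1 : x ≤ 1) :
    ∫ t in (0:ℝ)..x, Real.log (c * t) = x * Real.log (c * x) - x := by
  have hc0 : (0:ℝ) < c := by linarith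
  set g : ℝ → ℝ := fun t => (1/c) * ((c*t) * Real.log (c*t)) - t with hg
  have hcont : ContinuousOn g (Set.Icc 0 x) := by
    apply Continuous.continuousOn
    exact (continuous_const.mul
      (Real.continuous_mul_log.comp (continuous_const.mul continuous_id))).sub continuous_id
  have hderiv : ∀ t ∈ Set.Ioo 0 x, HasDerivWithinAt g (Real.log (c * t)) (Set.Ioi t) t := by
    intro t ht
    have hct : c * t ≠ 0 := ne_of_gt (mul_pos hc0 ht.1)
    have h1 : HasDerivAt (fun t : ℝ => c * t) c t := by
      simpa using (hasDerivAt_id t).const_mul c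
    have h2 : HasDerivAt (fun y : ℝ => y * Real.log y) (Real.log (c*t) + 1) (c*t) :=
      Real.hasDerivAt_mul_log hct
    have h3 : HasDerivAt (fun t : ℝ => (c*t) * Real.log (c*t))
        ((Real.log (c*t) + 1) * c) t := h2.comp t h1
    have h4 : HasDerivAt g ((1/c) * ((Real.log (c*t) + 1) * c) - 1) t :=
      (h3.const_mul (1/c)).sub (hasDerivAt_id t)
    have : (1/c) * ((Real.log (c*t) + 1) * c) - 1 = Real.log (c*t) := by
      field_simp
      ring
    rw [this] at h4
    exact h4.hasDerivWithinAt
  have hint : IntervalIntegrable (fun t => Real.log (c * t)) volume 0 x :=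
    intLinLog c x hc1 hc2 hx.le hx1
  have := intervalIntegral.integral_eq_sub_of_hasDeriv_right_of_le hx.le hcont hderiv hint
  rw [this, hg]
  simp only []
  rw [mul_zero, Real.log_zero]
  field_simp
  ring

lemma Lob_ge (x : ℝ) (hx0 : 0 ≤ x) (hx1 : x ≤ 1) :
    -(x * Real.log x) - x ≤ Lob x := by
  rcases eq_or_lt_of_le hx0 with h | h
  · rw [← h]; simp [Lob_zero]
  have hI : (∫ t in (0:ℝ)..x, LL t) ≤ ∫ t in (0:ℝ)..x, Real.log (2 * t) := by
    apply intervalIntegral.integral_mono_on hx0 (intLL1 x hx0 hx1)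
      (intLinLog 2 x (by norm_num) le_rfl hx0 hx1)
    intro t ht
    exact LL_le t ht.1 (ht.2.trans hx1)
  rw [integral_log_linear 2 x (by norm_num) le_rfl h hx1] at hI
  have e : Real.log (2 * x) = Real.log 2 + Real.log x :=
    Real.log_mul two_ne_zero (ne_of_gt h)
  have hlog2 : Real.log 2 ≤ 1 := by
    have := Real.log_le_sub_one_of_pos (by norm_num : (0:ℝ) < 2)
    linarith
  have hlog2' : 0 ≤ Real.log 2 := Real.log_nonneg (by norm_num)
  rw [Lob_eq]
  rw [e] at hI
  nlinarith

lemma Lob_le (x : ℝ) (hx0 : 0 < x) (hx1 : x ≤ 1) :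
    Lob x ≤ -(x * Real.log x) + x := by
  have hpi2 : (2:ℝ) ≤ π := Real.two_le_pi
  have hpi4 : π ≤ 4 := Real.pi_le_four
  have hc1 : (1:ℝ) ≤ 4 / π := by rw [le_div_iff₀ (by positivity)]; linarith
  have hc2 : (4:ℝ) / π ≤ 2 := by rw [div_le_iff₀ (by positivity)]; linarith
  have hI : (∫ t in (0:ℝ)..x, Real.log (4 / π * t)) ≤ ∫ t in (0:ℝ)..x, LL t := by
    apply intervalIntegral.integral_mono_on hx0.le
      (intLinLog (4/π) x hc1 hc2 hx0.le hx1) (intLL1 x hx0.le hx1)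
    intro t ht
    exact LL_ge t ht.1 (ht.2.trans hx1)
  rw [integral_log_linear (4/π) x hc1 hc2 hx0 hx1] at hI
  have e : Real.log (4 / π * x) = Real.log (4/π) + Real.log x :=
    Real.log_mul (by positivity) (ne_of_gt hx0)
  have h3 : 0 ≤ Real.log (4 / π) := Real.log_nonneg hc1
  rw [Lob_eq]
  rw [e] at hI
  nlinarith

/-- Local Lipschitz estimate for `Lob` near an interior point of `(0,π)`. -/
lemma Lob_lip (X : ℝ) (h1 : 0 < X) (h2 : X < π) :
    ∃ ε > 0, ∃ B : ℝ, 0 ≤ B ∧ ∀ y : ℝ, |y - X| ≤ ε → |Lob y - Lob X| ≤ B * |y - X| := by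
  obtain ⟨δ, hδ0, hδ⟩ := Metric.continuousAt_iff.1 (contLL_at X h1 h2) 1 one_pos
  refine ⟨min (min (X/2) ((π - X)/2)) (δ/2),
    lt_min (lt_min (by linarith) (by linarith)) (by linarith), |LL X| + 1, by positivity, ?_⟩
  intro y hy
  set ε := min (min (X/2) ((π - X)/2)) (δ/2) with hε
  have hε1 : ε ≤ X/2 := (min_le_left _ _).trans (min_le_left _ _)
  have hε2 : ε ≤ (π - X)/2 := (min_le_left _ _).trans (min_le_right _ _)
  have hε3 : ε ≤ δ/2 := min_le_right _ _
  have hy1 : X/2 ≤ y := by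
    have := abs_le.1 hy; linarith [this.1]
  have hy2 : y ≤ X + (π - X)/2 := by
    have := abs_le.1 hy; linarith [this.2]
  have hXI : X ∈ Set.Icc 0 π := ⟨h1.le, h2.le⟩
  have hyI : y ∈ Set.Icc 0 π := ⟨by linarith, by linarith⟩
  have hsub : Lob y - Lob X = -∫ t in X..y, LL t := Lob_sub X y hXI hyI
  rw [hsub, abs_neg]
  have hbound : ∀ t ∈ Set.uIoc X y, ‖LL t‖ ≤ |LL X| + 1 := by
    intro t ht
    have h5 : |t - X| ≤ |y - X| := by
      rcases le_total X y with h | h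
      · rw [Set.uIoc_of_le h] at ht
        rw [abs_of_nonneg (by linarith [ht.1] : (0:ℝ) ≤ t - X),
          abs_of_nonneg (by linarith : (0:ℝ) ≤ y - X)]
        linarith [ht.2]
      · rw [Set.uIoc_of_ge h] at ht
        rw [abs_of_nonpos (by linarith [ht.2] : t - X ≤ 0),
          abs_of_nonpos (by linarith : y - X ≤ 0)]
        linarith [ht.1]
    have hdist : dist t X < δ := by
      rw [Real.dist_eq]
      calc |t - X| ≤ |y - X| := h5
        _ ≤ ε := hy
        _ ≤ δ/2 := hε3
        _ < δ := by linarith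
    have := hδ hdist
    rw [Real.dist_eq] at this
    rw [Real.norm_eq_abs]
    calc |LL t| = |LL X + (LL t - LL X)| := by ring_nf
      _ ≤ |LL X| + |LL t - LL X| := abs_add_le _ _
      _ ≤ |LL X| + 1 := by linarith [this]
  calc ‖∫ t in X..y, LL t‖ ≤ (|LL X| + 1) * |y - X| :=
        intervalIntegral.norm_integral_le_of_norm_le_const hbound
    _ = (|LL X| + 1) * |y - X| := rfl

noncomputable def pathL (x x' t : ℝ) : ℝ :=
  Lob (2*π*(x + t*(x' - x))) - Lob (2*π*x)

/-- interior angle: locally Lipschitz contribution -/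
lemma pathL_interior (x x' : ℝ) (hx : x ∈ Set.Ioo 0 (1/2:ℝ)) (hx' : x' ∈ Set.Ioo 0 (1/2:ℝ)) :
    ∃ C : ℝ, ∃ ε > 0, ∀ t ∈ Set.Ioc (0:ℝ) ε, |pathL x x' t| ≤ C * t := by
  have hpi : (2:ℝ) ≤ π := Real.two_le_pi
  have hX1 : 0 < 2*π*x := by have := hx.1; positivity
  have hX2 : 2*π*x < π := by nlinarith [hx.2, Real.pi_pos]
  obtain ⟨ε₀, hε₀, B, hB0, hB⟩ := Lob_lip (2*π*x) hX1 hX2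
  refine ⟨B * (2*π), ε₀ / (2*π), by positivity, ?_⟩
  intro t ht
  have ht0 : 0 < t := ht.1
  have hd : |x' - x| ≤ 1 := by
    rw [abs_le]; constructor <;> [linarith [hx.2, hx'.1]; linarith [hx.1, hx'.2]]
  have harg : 2*π*(x + t*(x' - x)) - 2*π*x = 2*π*t*(x' - x) := by ring
  have habs : |2*π*(x + t*(x' - x)) - 2*π*x| ≤ 2*π*t := by
    rw [harg, abs_mul]
    have : |2*π*t| = 2*π*t := abs_of_pos (by positivity)
    rw [this]
    have h2t : (0:ℝ) ≤ 2*π*t := by positivity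
    have := mul_le_mul_of_nonneg_left hd h2t
    linarith
  have hε' : |2*π*(x + t*(x' - x)) - 2*π*x| ≤ ε₀ := by
    have : 2*π*t ≤ ε₀ := by
      have h := ht.2
      calc 2*π*t ≤ 2*π*(ε₀/(2*π)) := by nlinarith [Real.pi_pos]
        _ = ε₀ := by field_simp
    linarith
  have := hB _ hε'
  calc |pathL x x' t| ≤ B * |2*π*(x + t*(x' - x)) - 2*π*x| := this
    _ ≤ B * (2*π*t) := mul_le_mul_of_nonneg_left habs hB0
    _ = B * (2*π) * t := by ring

lemma bound_2pixt (x' t : ℝ) (hx0 : 0 ≤ x') (hx2 : x' ≤ 1/2) (ht0 : 0 ≤ t) (ht8 : t ≤ 1/8) :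
    2*π*x'*t ≤ 1/2 := by
  have hpi4 : π ≤ 4 := Real.pi_le_four
  have h1 : 2*π*x' ≤ 4 := by
    nlinarith [mul_le_mul_of_nonneg_left hx2 Real.pi_pos.le]
  calc 2*π*x'*t = (2*π*x')*t := by ring
    _ ≤ 4*(1/8) := mul_le_mul h1 ht8 ht0 (by norm_num)
    _ ≤ 1/2 := by norm_num

lemma pathL_zero_eq (x' t : ℝ) : pathL 0 x' t = Lob (2*π*x'*t) := by
  unfold pathL
  rw [show 2*π*((0:ℝ) + t*(x' - 0)) = 2*π*x'*t from by ring,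
    show 2*π*(0:ℝ) = 0 from by ring, Lob_zero, sub_zero]

lemma pathL_zero_est (x' : ℝ) (hx' : x' ∈ Set.Ioo 0 (1/2:ℝ)) :
    ∀ t ∈ Set.Ioc (0:ℝ) (1/8:ℝ),
      |pathL 0 x' t - 2*π*x'*(t*(-Real.log t))| ≤ (2*π*x'*(1 + |Real.log (2*π*x')|)) * t := by
  intro t ht
  have hpi : (2:ℝ) ≤ π := Real.two_le_pi
  have hpi4 : π ≤ 4 := Real.pi_le_four
  have hx0 := hx'.1
  have hx2 := hx'.2
  have ht0 := ht.1
  have ht8 := ht.2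
  rw [pathL_zero_eq]
  set X := 2*π*x'*t with hX
  have hX0 : 0 < X := by positivity
  have hX1 : X ≤ 1 := le_trans (bound_2pixt x' t hx0.le hx2.le ht0.le ht8) (by norm_num)
  have hlow := Lob_ge X hX0.le hX1
  have hup := Lob_le X hX0 hX1
  have hxx : (0:ℝ) < 2*π*x' := by positivity
  have hlogX : Real.log X = Real.log (2*π*x') + Real.log t :=
    Real.log_mul (ne_of_gt hxx) (ne_of_gt ht0)
  have hXlog : X * Real.log X = X * Real.log (2*π*x') + X * Real.log t := by
    rw [hlogX]; ring
  have hXt : X * Real.log t = 2*π*x'*(t*Real.log t) := by rw [hX]; ring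
  have hCt : (2*π*x'*(1 + |Real.log (2*π*x')|))*t = X + X*|Real.log (2*π*x')| := by
    rw [hX]; ring
  have h1' : X * Real.log (2*π*x') ≤ X * |Real.log (2*π*x')| :=
    mul_le_mul_of_nonneg_left (le_abs_self _) hX0.le
  have h2' : -(X * |Real.log (2*π*x')|) ≤ X * Real.log (2*π*x') := by
    have := mul_le_mul_of_nonneg_left (neg_abs_le (Real.log (2*π*x'))) hX0.le
    linarith [this]
  rw [abs_le]
  constructor
  · rw [hCt]; linarith
  · rw [hCt]; linarith

/-- single-angle lower bound, for a non-half angle -/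
lemma pathL_lower (x x' : ℝ) (hx : x ∈ Set.Icc 0 (1/2:ℝ)) (hxne : x ≠ 1/2)
    (hx' : x' ∈ Set.Ioo 0 (1/2:ℝ)) :
    ∃ C : ℝ, ∃ ε : ℝ, 0 < ε ∧ ∀ t ∈ Set.Ioc (0:ℝ) ε, -(C*t) ≤ pathL x x' t := by
  rcases eq_or_lt_of_le hx.1 with h0 | h0
  · -- x = 0
    refine ⟨2*π*x'*(1 + |Real.log (2*π*x')|), 1/8, by norm_num, ?_⟩
    intro t ht
    have hest := pathL_zero_est x' hx' t ht
    have hlt : Real.log t ≤ 0 := Real.log_nonpos ht.1.le (by linarith [ht.2])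
    have hx0 := hx'.1
    have hnn : 0 ≤ 2*π*x'*(t*(-Real.log t)) := by
      have : 0 ≤ -Real.log t := by linarith
      have := ht.1.le
      positivity
    rw [← h0] at *
    have := (abs_le.1 hest).1
    linarith
  · obtain ⟨C, ε, hε, hC⟩ := pathL_interior x x' ⟨h0, lt_of_le_of_ne hx.2 hxne⟩ hx'
    exact ⟨C, ε, hε, fun t ht => by have := (abs_le.1 (hC t ht)).1; linarith⟩

/-- taut tetrahedron: the singular terms cancel -/
lemma pathL_taut (y' z' : ℝ) (hy' : y' ∈ Set.Ioo 0 (1/2:ℝ)) (hz' : z' ∈ Set.Ioo 0 (1/2:ℝ)) :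
    ∀ t ∈ Set.Ioc (0:ℝ) (1/8:ℝ),
      -((4*π)*t) ≤ pathL (1/2) (1/2 - (y'+z')) t + pathL 0 y' t + pathL 0 z' t := by
  intro t ht
  have hpi : (2:ℝ) ≤ π := Real.two_le_pi
  have hpi4 : π ≤ 4 := Real.pi_le_four
  have ht0 := ht.1
  have ht8 := ht.2
  have hy0 := hy'.1; have hy2 := hy'.2
  have hz0 := hz'.1; have hz2 := hz'.2
  set V := 2*π*y'*t with hV
  set W := 2*π*z'*t with hW
  have hV0 : 0 < V := by positivity
  have hW0 : 0 < W := by positivity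
  have hVb : V ≤ 1/2 := bound_2pixt y' t hy0.le hy2.le ht0.le ht8
  have hWb : W ≤ 1/2 := bound_2pixt z' t hz0.le hz2.le ht0.le ht8
  have hV1 : V ≤ 1 := by linarith
  have hW1 : W ≤ 1 := by linarith
  have hU1 : V + W ≤ 1 := by linarith
  have hUpi : V + W ≤ π := by linarith
  have e1 : pathL (1/2) (1/2 - (y'+z')) t = Lob (π - (V+W)) - Lob π := by
    unfold pathL
    rw [show 2*π*((1:ℝ)/2 + t*((1/2 - (y'+z')) - 1/2)) = π - (V+W) from by rw [hV, hW]; ring,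
      show 2*π*((1:ℝ)/2) = π from by ring]
  have e2 : Lob (π - (V+W)) = Lob π - Lob (V+W) :=
    Lob_reflect (V+W) ⟨by positivity, hUpi⟩
  have hLU := Lob_le (V+W) (by positivity) hU1
  have hLV := Lob_ge V hV0.le hV1
  have hLW := Lob_ge W hW0.le hW1
  have hlogV : Real.log V ≤ Real.log (V+W) := Real.log_le_log hV0 (by linarith)
  have hlogW : Real.log W ≤ Real.log (V+W) := Real.log_le_log hW0 (by linarith)
  have hm1 : V * Real.log V ≤ V * Real.log (V+W) :=
    mul_le_mul_of_nonneg_left hlogV hV0.le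
  have hm2 : W * Real.log W ≤ W * Real.log (V+W) :=
    mul_le_mul_of_nonneg_left hlogW hW0.le
  rw [e1, e2, pathL_zero_eq, pathL_zero_eq, ← hV, ← hW]
  have hsum : V + W + V + W ≤ 4*π*t := by
    have : V + W = 2*π*t*(y'+z') := by rw [hV, hW]; ring
    nlinarith [mul_le_mul_of_nonneg_left (show y'+z' ≤ 1 by linarith)
      (show (0:ℝ) ≤ 2*π*t by positivity)]
  nlinarith [hLU, hLV, hLW, hm1, hm2]

/-- lower bound for a whole tetrahedron's contribution -/
lemma triple_lower (x y z x' y' z' : ℝ)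
    (hx : x ∈ Set.Icc 0 (1/2:ℝ)) (hy : y ∈ Set.Icc 0 (1/2:ℝ)) (hz : z ∈ Set.Icc 0 (1/2:ℝ))
    (hs : x + y + z = 1/2)
    (hx' : x' ∈ Set.Ioo 0 (1/2:ℝ)) (hy' : y' ∈ Set.Ioo 0 (1/2:ℝ)) (hz' : z' ∈ Set.Ioo 0 (1/2:ℝ))
    (hs' : x' + y' + z' = 1/2) :
    ∃ C : ℝ, ∃ ε : ℝ, 0 < ε ∧ ∀ t ∈ Set.Ioc (0:ℝ) ε,
      -(C*t) ≤ pathL x x' t + pathL y y' t + pathL z z' t := by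
  by_cases hx2 : x = 1/2
  · have hy0 : y = 0 := by have := hy.1; have := hz.1; linarith
    have hz0 : z = 0 := by have := hy.1; have := hz.1; linarith
    have hx'e : x' = 1/2 - (y' + z') := by linarith
    refine ⟨4*π, 1/8, by norm_num, ?_⟩
    intro t ht
    have := pathL_taut y' z' hy' hz' t ht
    rw [hx2, hy0, hz0, hx'e]
    linarith
  by_cases hy2 : y = 1/2
  · have hx0 : x = 0 := by have := hx.1; have := hz.1; linarith
    have hz0 : z = 0 := by have := hx.1; have := hz.1; linarith
    have hy'e : y' = 1/2 - (x' + z') := by linarith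
    refine ⟨4*π, 1/8, by norm_num, ?_⟩
    intro t ht
    have := pathL_taut x' z' hx' hz' t ht
    rw [hy2, hx0, hz0, hy'e]
    linarith
  by_cases hz2 : z = 1/2
  · have hx0 : x = 0 := by have := hx.1; have := hy.1; linarith
    have hy0 : y = 0 := by have := hx.1; have := hy.1; linarith
    have hz'e : z' = 1/2 - (x' + y') := by linarith
    refine ⟨4*π, 1/8, by norm_num, ?_⟩
    intro t ht
    have := pathL_taut x' y' hx' hy' t ht
    rw [hz2, hx0, hy0, hz'e]
    linarith
  · obtain ⟨C₁, ε₁, hε₁, h₁⟩ := pathL_lower x x' hx hx2 hx'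
    obtain ⟨C₂, ε₂, hε₂, h₂⟩ := pathL_lower y y' hy hy2 hy'
    obtain ⟨C₃, ε₃, hε₃, h₃⟩ := pathL_lower z z' hz hz2 hz'
    refine ⟨C₁ + C₂ + C₃, min ε₁ (min ε₂ ε₃), lt_min hε₁ (lt_min hε₂ hε₃), ?_⟩
    intro t ht
    have ht1 : t ∈ Set.Ioc (0:ℝ) ε₁ := ⟨ht.1, ht.2.trans (min_le_left _ _)⟩
    have ht2 : t ∈ Set.Ioc (0:ℝ) ε₂ :=
      ⟨ht.1, ht.2.trans ((min_le_right _ _).trans (min_le_left _ _))⟩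
    have ht3 : t ∈ Set.Ioc (0:ℝ) ε₃ :=
      ⟨ht.1, ht.2.trans ((min_le_right _ _).trans (min_le_right _ _))⟩
    have := h₁ t ht1; have := h₂ t ht2; have := h₃ t ht3
    linarith

/-- lower bound for the flat-not-taut tetrahedron: a positive singular term remains -/
lemma triple_zero (y z x' y' z' : ℝ)
    (hy : y ∈ Set.Ioo 0 (1/2:ℝ)) (hz : z ∈ Set.Ioo 0 (1/2:ℝ))
    (hx' : x' ∈ Set.Ioo 0 (1/2:ℝ)) (hy' : y' ∈ Set.Ioo 0 (1/2:ℝ)) (hz' : z' ∈ Set.Ioo 0 (1/2:ℝ)) :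
    ∃ C : ℝ, ∃ ε : ℝ, 0 < ε ∧ ∀ t ∈ Set.Ioc (0:ℝ) ε,
      2*π*x'*(t*(-Real.log t)) - C*t ≤ pathL 0 x' t + pathL y y' t + pathL z z' t := by
  obtain ⟨C₂, ε₂, hε₂, h₂⟩ := pathL_interior y y' hy hy'
  obtain ⟨C₃, ε₃, hε₃, h₃⟩ := pathL_interior z z' hz hz'
  refine ⟨2*π*x'*(1 + |Real.log (2*π*x')|) + C₂ + C₃, min (1/8) (min ε₂ ε₃),
    lt_min (by norm_num) (lt_min hε₂ hε₃), ?_⟩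
  intro t ht
  have ht1 : t ∈ Set.Ioc (0:ℝ) (1/8) := ⟨ht.1, ht.2.trans (min_le_left _ _)⟩
  have ht2 : t ∈ Set.Ioc (0:ℝ) ε₂ :=
    ⟨ht.1, ht.2.trans ((min_le_right _ _).trans (min_le_left _ _))⟩
  have ht3 : t ∈ Set.Ioc (0:ℝ) ε₃ :=
    ⟨ht.1, ht.2.trans ((min_le_right _ _).trans (min_le_right _ _))⟩
  have e1 := (abs_le.1 (pathL_zero_est x' hx' t ht1)).1
  have e2 := (abs_le.1 (h₂ t ht2)).1
  have e3 := (abs_le.1 (h₃ t ht3)).1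
  linarith

end Flat73

/-- The five balancing equations of the ideal triangulation `X` of `S³∖7₃`. -/
def BalancedX (a b c : Fin 5 → ℝ) : Prop :=
  b 0 + b 1 + a 2 + b 3 + c 3 + a 4 + b 4 = 1 ∧
  b 0 + c 0 + c 1 + b 2 + c 2 + a 3 + c 4 = 1 ∧
  a 1 + b 2 + a 3 + b 3 + a 4 + c 4 = 1 ∧
  a 0 + c 0 + a 1 + c 1 + a 2 = 1 ∧
  a 0 + b 1 + c 2 + c 3 + b 4 = 1

/-- Membership in `𝒜̄_X`, the closure of the space of angle structures. -/
def InAbar (a b c : Fin 5 → ℝ) : Prop :=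
  (∀ k, a k ∈ Set.Icc (0:ℝ) (1/2) ∧ b k ∈ Set.Icc (0:ℝ) (1/2) ∧
    c k ∈ Set.Icc (0:ℝ) (1/2)) ∧
  (∀ k, a k + b k + c k = 1/2) ∧ BalancedX a b c

/-- The volume functional `𝒱`. -/
noncomputable def VolF (a b c : Fin 5 → ℝ) : ℝ :=
  ∑ k, (Lob (2 * π * a k) + Lob (2 * π * b k) + Lob (2 * π * c k))

namespace Flat73

lemma convIcc (u v t : ℝ) (hu : u ∈ Set.Icc (0:ℝ) (1/2)) (hv : v ∈ Set.Icc (0:ℝ) (1/2))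
    (ht0 : 0 ≤ t) (ht1 : t ≤ 1) : u + t*(v - u) ∈ Set.Icc (0:ℝ) (1/2) := by
  constructor
  · nlinarith [mul_nonneg (sub_nonneg.2 ht1) hu.1, mul_nonneg ht0 hv.1]
  · nlinarith [mul_le_mul_of_nonneg_left hu.2 (sub_nonneg.2 ht1),
      mul_le_mul_of_nonneg_left hv.2 ht0]

lemma InAbar_convex (a b c a' b' c' : Fin 5 → ℝ) (h1 : InAbar a b c) (h2 : InAbar a' b' c')
    (t : ℝ) (ht0 : 0 ≤ t) (ht1 : t ≤ 1) :
    InAbar (fun j => a j + t*(a' j - a j)) (fun j => b j + t*(b' j - b j))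
      (fun j => c j + t*(c' j - c j)) := by
  obtain ⟨hr1, hs1, e11, e12, e13, e14, e15⟩ := h1
  obtain ⟨hr2, hs2, e21, e22, e23, e24, e25⟩ := h2
  refine ⟨?_, ?_, ?_, ?_, ?_, ?_, ?_⟩
  · intro j
    exact ⟨convIcc _ _ t (hr1 j).1 (hr2 j).1 ht0 ht1,
      convIcc _ _ t (hr1 j).2.1 (hr2 j).2.1 ht0 ht1,
      convIcc _ _ t (hr1 j).2.2 (hr2 j).2.2 ht0 ht1⟩
  · intro j
    simp only []
    linear_combination (1 - t) * hs1 j + t * hs2 j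
  · simp only []
    linear_combination (1 - t) * e11 + t * e21
  · simp only []
    linear_combination (1 - t) * e12 + t * e22
  · simp only []
    linear_combination (1 - t) * e13 + t * e23
  · simp only []
    linear_combination (1 - t) * e14 + t * e24
  · simp only []
    linear_combination (1 - t) * e15 + t * e25

end Flat73

open Flat73

/-- a maximizer of the volume functional on `𝒜̄_X` having a flat
tetrahedron must have that tetrahedron taut. -/
theorem flat_implies_taut (a b c : Fin 5 → ℝ) (hmem : InAbar a b c)
    (hmax : ∀ a' b' c' : Fin 5 → ℝ, InAbar a' b' c' →
      VolF a' b' c' ≤ VolF a b c)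
    (k : Fin 5) (h0 : a k = 0 ∨ b k = 0 ∨ c k = 0) :
    (a k = 0 ∧ b k = 0 ∧ c k = 1/2) ∨
    (a k = 0 ∧ b k = 1/2 ∧ c k = 0) ∨
    (a k = 1/2 ∧ b k = 0 ∧ c k = 0) := by
  by_contra hcon
  obtain ⟨hrange, hsumA, hbal⟩ := id hmem
  -- the explicit interior angle structure β
  set A' : Fin 5 → ℝ := ![1/3, 1/4, 1/4, 1/6, 1/12] with hA'
  set B' : Fin 5 → ℝ := ![1/12, 1/6, 1/12, 1/12, 1/12] with hB'
  set C' : Fin 5 → ℝ := ![1/12, 1/12, 1/6, 1/4, 1/3] with hC'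
  have hA'r : ∀ j : Fin 5, A' j ∈ Set.Ioo 0 (1/2:ℝ) := by
    intro j; fin_cases j <;> norm_num [hA']
  have hB'r : ∀ j : Fin 5, B' j ∈ Set.Ioo 0 (1/2:ℝ) := by
    intro j; fin_cases j <;> norm_num [hB']
  have hC'r : ∀ j : Fin 5, C' j ∈ Set.Ioo 0 (1/2:ℝ) := by
    intro j; fin_cases j <;> norm_num [hC']
  have hsum' : ∀ j : Fin 5, A' j + B' j + C' j = 1/2 := by
    intro j; fin_cases j <;> norm_num [hA', hB', hC']
  have hbal' : BalancedX A' B' C' := by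
    refine ⟨?_, ?_, ?_, ?_, ?_⟩ <;> simp [hA', hB', hC', Matrix.cons_val] <;> norm_num
  have hβmem : InAbar A' B' C' :=
    ⟨fun j => ⟨Set.Ioo_subset_Icc_self (hA'r j), Set.Ioo_subset_Icc_self (hB'r j),
      Set.Ioo_subset_Icc_self (hC'r j)⟩, hsum', hbal'⟩
  -- configuration at the flat tetrahedron
  obtain ⟨ha, hb, hc⟩ := hrange k
  have hs := hsumA k
  have hconfig : (a k = 0 ∧ b k ∈ Set.Ioo 0 (1/2:ℝ) ∧ c k ∈ Set.Ioo 0 (1/2:ℝ)) ∨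
      (b k = 0 ∧ a k ∈ Set.Ioo 0 (1/2:ℝ) ∧ c k ∈ Set.Ioo 0 (1/2:ℝ)) ∨
      (c k = 0 ∧ a k ∈ Set.Ioo 0 (1/2:ℝ) ∧ b k ∈ Set.Ioo 0 (1/2:ℝ)) := by
    rcases h0 with h | h | h
    · rcases eq_or_lt_of_le hb.1 with h1 | h1
      · exact absurd (Or.inl ⟨h, h1.symm, by linarith⟩) hcon
      rcases eq_or_lt_of_le hc.1 with h2 | h2
      · exact absurd (Or.inr (Or.inl ⟨h, by linarith, h2.symm⟩)) hcon
      exact Or.inl ⟨h, ⟨h1, by linarith⟩, ⟨h2, by linarith⟩⟩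
    · rcases eq_or_lt_of_le ha.1 with h1 | h1
      · exact absurd (Or.inl ⟨h1.symm, h, by linarith⟩) hcon
      rcases eq_or_lt_of_le hc.1 with h2 | h2
      · exact absurd (Or.inr (Or.inr ⟨by linarith, h, h2.symm⟩)) hcon
      exact Or.inr (Or.inl ⟨h, ⟨h1, by linarith⟩, ⟨h2, by linarith⟩⟩)
    · rcases eq_or_lt_of_le ha.1 with h1 | h1
      · exact absurd (Or.inr (Or.inl ⟨h1.symm, by linarith, h⟩)) hcon
      rcases eq_or_lt_of_le hb.1 with h2 | h2
      · exact absurd (Or.inr (Or.inr ⟨by linarith, h2.symm, h⟩)) hcon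
      exact Or.inr (Or.inr ⟨h, ⟨h1, by linarith⟩, ⟨h2, by linarith⟩⟩)
  -- lower bounds for every tetrahedron
  have hTL : ∀ j : Fin 5, ∃ C : ℝ, ∃ ε : ℝ, 0 < ε ∧ ∀ t ∈ Set.Ioc (0:ℝ) ε,
      -(C*t) ≤ pathL (a j) (A' j) t + pathL (b j) (B' j) t + pathL (c j) (C' j) t := by
    intro j
    exact triple_lower _ _ _ _ _ _ (hrange j).1 (hrange j).2.1 (hrange j).2.2 (hsumA j)
      (hA'r j) (hB'r j) (hC'r j) (hsum' j)
  choose Cf εf hf using hTL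
  -- the improved bound at tetrahedron k
  have hK : ∃ δ : ℝ, 0 < δ ∧ ∃ Ck : ℝ, ∃ εk : ℝ, 0 < εk ∧ ∀ t ∈ Set.Ioc (0:ℝ) εk,
      δ*(t*(-Real.log t)) - Ck*t ≤
        pathL (a k) (A' k) t + pathL (b k) (B' k) t + pathL (c k) (C' k) t := by
    have hpiA : (0:ℝ) < 2*π*(A' k) := by have := (hA'r k).1; positivity
    have hpiB : (0:ℝ) < 2*π*(B' k) := by have := (hB'r k).1; positivity
    have hpiC : (0:ℝ) < 2*π*(C' k) := by have := (hC'r k).1; positivity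
    rcases hconfig with ⟨h, hyy, hzz⟩ | ⟨h, hyy, hzz⟩ | ⟨h, hyy, hzz⟩
    · obtain ⟨C, ε, hε, hC⟩ := triple_zero (b k) (c k) (A' k) (B' k) (C' k)
        hyy hzz (hA'r k) (hB'r k) (hC'r k)
      refine ⟨2*π*(A' k), hpiA, C, ε, hε, ?_⟩
      intro t ht
      have := hC t ht
      rw [h]
      linarith
    · obtain ⟨C, ε, hε, hC⟩ := triple_zero (a k) (c k) (B' k) (A' k) (C' k)
        hyy hzz (hB'r k) (hA'r k) (hC'r k)
      refine ⟨2*π*(B' k), hpiB, C, ε, hε, ?_⟩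
      intro t ht
      have := hC t ht
      rw [h]
      linarith
    · obtain ⟨C, ε, hε, hC⟩ := triple_zero (a k) (b k) (C' k) (A' k) (B' k)
        hyy hzz (hC'r k) (hA'r k) (hB'r k)
      refine ⟨2*π*(C' k), hpiC, C, ε, hε, ?_⟩
      intro t ht
      have := hC t ht
      rw [h]
      linarith
  obtain ⟨δ, hδ, Ck, εk, hεk, hK⟩ := hK
  -- choose the perturbation size
  set S : ℝ := ∑ j : Fin 5, |Cf j| with hS
  set εmin : ℝ := min εk (Finset.univ.inf' Finset.univ_nonempty εf) with hεmin
  have hεmin0 : 0 < εmin := by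
    apply lt_min hεk
    rw [Finset.lt_inf'_iff]
    intro j _
    exact (hf j).1
  set t₀ : ℝ := min (min εmin 1) (Real.exp (-(Ck + S + 1)/δ)) with ht₀
  have ht₀0 : 0 < t₀ := by
    apply lt_min (lt_min hεmin0 one_pos) (Real.exp_pos _)
  have ht₀1 : t₀ ≤ 1 := ((min_le_left _ _).trans (min_le_right _ _))
  have ht₀k : t₀ ≤ εk := ((min_le_left _ _).trans ((min_le_left _ _).trans (min_le_left _ _)))
  have ht₀j : ∀ j : Fin 5, t₀ ≤ εf j := by
    intro j
    calc t₀ ≤ εmin := (min_le_left _ _).trans (min_le_left _ _)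
      _ ≤ Finset.univ.inf' Finset.univ_nonempty εf := min_le_right _ _
      _ ≤ εf j := Finset.inf'_le εf (Finset.mem_univ j)
  have hlog : (Ck + S + 1)/δ ≤ -Real.log t₀ := by
    have h1 : Real.log t₀ ≤ Real.log (Real.exp (-(Ck + S + 1)/δ)) :=
      Real.log_le_log ht₀0 (min_le_right _ _)
    rw [Real.log_exp] at h1
    have : -(Ck + S + 1)/δ = -((Ck + S + 1)/δ) := by ring
    rw [this] at h1
    linarith
  -- the perturbed point
  have hmem2 : InAbar (fun j => a j + t₀*(A' j - a j)) (fun j => b j + t₀*(B' j - b j))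
      (fun j => c j + t₀*(C' j - c j)) :=
    InAbar_convex a b c A' B' C' hmem hβmem t₀ ht₀0.le ht₀1
  have hmax2 := hmax _ _ _ hmem2
  -- the volume difference
  set T : Fin 5 → ℝ := fun j =>
    pathL (a j) (A' j) t₀ + pathL (b j) (B' j) t₀ + pathL (c j) (C' j) t₀ with hT
  have hVdiff : VolF (fun j => a j + t₀*(A' j - a j)) (fun j => b j + t₀*(B' j - b j))
      (fun j => c j + t₀*(C' j - c j)) - VolF a b c = ∑ j : Fin 5, T j := by
    simp only [VolF, hT, pathL, Fin.sum_univ_five]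
    ring
  have hsplit : (∑ j : Fin 5, T j) = T k + ∑ j ∈ Finset.univ.erase k, T j :=
    (Finset.add_sum_erase Finset.univ T (Finset.mem_univ k)).symm
  have hothers : ∀ j ∈ Finset.univ.erase k, -(|Cf j| * t₀) ≤ T j := by
    intro j _
    have h1 := (hf j).2 t₀ ⟨ht₀0, ht₀j j⟩
    have h2 : Cf j * t₀ ≤ |Cf j| * t₀ := mul_le_mul_of_nonneg_right (le_abs_self _) ht₀0.le
    show -(|Cf j| * t₀) ≤ pathL (a j) (A' j) t₀ + pathL (b j) (B' j) t₀ + pathL (c j) (C' j) t₀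
    linarith
  have hsum_others : ∑ j ∈ Finset.univ.erase k, -(|Cf j| * t₀) ≤
      ∑ j ∈ Finset.univ.erase k, T j := Finset.sum_le_sum hothers
  have herase : ∑ j ∈ Finset.univ.erase k, |Cf j| ≤ S :=
    Finset.sum_le_sum_of_subset_of_nonneg (Finset.erase_subset _ _)
      (fun i _ _ => abs_nonneg _)
  have heq : ∑ j ∈ Finset.univ.erase k, -(|Cf j| * t₀) =
      -((∑ j ∈ Finset.univ.erase k, |Cf j|) * t₀) := by
    rw [Finset.sum_mul, ← Finset.sum_neg_distrib]
  have hTk := hK t₀ ⟨ht₀0, ht₀k⟩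
  have hsing : (Ck + S + 1)*t₀ ≤ δ*(t₀*(-Real.log t₀)) := by
    have h1 : δ*t₀*((Ck + S + 1)/δ) ≤ δ*t₀*(-Real.log t₀) :=
      mul_le_mul_of_nonneg_left hlog (by positivity)
    have h2 : δ*t₀*((Ck + S + 1)/δ) = (Ck + S + 1)*t₀ := by
      field_simp
    nlinarith
  -- final contradiction
  have hfinal : 0 < VolF (fun j => a j + t₀*(A' j - a j)) (fun j => b j + t₀*(B' j - b j))
      (fun j => c j + t₀*(C' j - c j)) - VolF a b c := by
    rw [hVdiff, hsplit]
    have hTklb : δ*(t₀*(-Real.log t₀)) - Ck*t₀ ≤ T k := hTk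
    have hmul : (∑ j ∈ Finset.univ.erase k, |Cf j|) * t₀ ≤ S * t₀ :=
      mul_le_mul_of_nonneg_right herase ht₀0.le
    nlinarith
  linarith
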